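/- arXiv:2105.10679 — 2 statements merged into one kernel-verified Lean document; each statement's English description precedes it below -/
import Mathlib

section
/- Let P = {e_1,…,e_m} be an atomic Cartesian decomposition of a finite set Ω, and let R be another atomic Cartesian decomposition of Ω with R ⪯ P (every element of P is contained in some element of R). Then there is a partition 𝓡 of M = {1,…,m} such that R = {P_I : I ∈ 𝓡}. -/
open Set

def rcomp {Ω : Type*} (r s : Set (Ω × Ω)) : Set (Ω × Ω) :=
  {p | ∃ γ, (p.1, γ) ∈ r ∧ (γ, p.2) ∈ s}

def rconv {Ω : Type*} (r : Set (Ω × Ω)) : Set (Ω × Ω) := {p | (p.2, p.1) ∈ r}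

def rdiag (Ω : Type*) : Set (Ω × Ω) := {p | p.1 = p.2}

def IsEquivRel {Ω : Type*} (e : Set (Ω × Ω)) : Prop :=
  Equivalence (fun a b => (a, b) ∈ e)

/-- The smallest equivalence relation containing `r`. -/
def eqvClosure {Ω : Type*} (r : Set (Ω × Ω)) : Set (Ω × Ω) :=
  ⋂₀ {e | IsEquivRel e ∧ r ⊆ e}

/-- Join of two equivalence relations. -/
def rjoin {Ω : Type*} (e f : Set (Ω × Ω)) : Set (Ω × Ω) := eqvClosure (e ∪ f)

def IsClass {Ω : Type*} (e : Set (Ω × Ω)) (Δ : Set Ω) : Prop :=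
  ∃ α, Δ = {β | (α, β) ∈ e}

def setoidRel {Ω : Type*} (e : Setoid Ω) : Set (Ω × Ω) := {p | e.r p.1 p.2}

/-- The relation induced on the quotient `Ω/e` by a relation `r` on `Ω`. -/
def qmap {Ω : Type*} (e : Setoid Ω) (r : Set (Ω × Ω)) :
    Set (Quotient e × Quotient e) :=
  {p | ∃ a b : Ω, Quotient.mk e a = p.1 ∧ Quotient.mk e b = p.2 ∧ (a, b) ∈ r}

/-- Tensor product of relations. -/
def tensorRel {m : ℕ} {Ω : Fin m → Type*} (s : ∀ i, Set (Ω i × Ω i)) :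
    Set ((∀ i, Ω i) × (∀ i, Ω i)) :=
  {p | ∀ i, (p.1 i, p.2 i) ∈ s i}

def tensor2 {Ω₁ Ω₂ : Type*} (s₁ : Set (Ω₁ × Ω₁)) (s₂ : Set (Ω₂ × Ω₂)) :
    Set ((Ω₁ × Ω₂) × (Ω₁ × Ω₂)) :=
  {p | (p.1.1, p.2.1) ∈ s₁ ∧ (p.1.2, p.2.2) ∈ s₂}

/-- `PP e I` is the join of the equivalence relations `e i`, `i ∈ I`. -/
def PP {Ω : Type*} {m : ℕ} (e : Fin m → Set (Ω × Ω)) (I : Set (Fin m)) :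
    Set (Ω × Ω) :=
  eqvClosure (⋃ i ∈ I, e i)

/-- An atomic Cartesian decomposition, given as a family of equivalence relations. -/
def IsACDfam {Ω : Type*} {m : ℕ} (e : Fin m → Set (Ω × Ω)) : Prop :=
  0 < m ∧ (∀ i, IsEquivRel (e i)) ∧ (∀ i, e i ≠ rdiag Ω) ∧
  (∀ i j, rcomp (e i) (e j) = rcomp (e j) (e i)) ∧
  (∀ i, e i ∩ PP e ({i}ᶜ) = rdiag Ω) ∧
  (∀ i, rjoin (e i) (PP e ({i}ᶜ)) = Set.univ)

/-- Join of a set of relations. -/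
def joinAll {Ω : Type*} (B : Set (Set (Ω × Ω))) : Set (Ω × Ω) := eqvClosure (⋃₀ B)

/-- The `P`-complement of `e`: the join of the members of `P` other than `e`. -/
def pcompl {Ω : Type*} (P : Set (Set (Ω × Ω))) (e : Set (Ω × Ω)) : Set (Ω × Ω) :=
  joinAll (P \ {e})

/-- An atomic Cartesian decomposition, given as a set of equivalence relations. -/
def IsACD {Ω : Type*} (P : Set (Set (Ω × Ω))) : Prop :=
  P.Nonempty ∧ (∀ e ∈ P, IsEquivRel e ∧ e ≠ rdiag Ω) ∧
  (∀ e ∈ P, ∀ f ∈ P, rcomp e f = rcomp f e) ∧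
  (∀ e ∈ P, e ∩ pcompl P e = rdiag Ω ∧ rjoin e (pcompl P e) = Set.univ)

def IsPartitionOf {α : Type*} (P : Set α) (C : Set (Set α)) : Prop :=
  (∀ B ∈ C, B.Nonempty) ∧ (∀ B ∈ C, ∀ B' ∈ C, B ≠ B' → Disjoint B B') ∧ ⋃₀ C = P

/-- A coherent configuration on `Ω`. -/
structure CohCfg (Ω : Type*) where
  S : Set (Set (Ω × Ω))
  empty_not_mem : ∅ ∉ S
  cover : ∀ p : Ω × Ω, ∃ s ∈ S, p ∈ s
  pairwise_disjoint : ∀ s ∈ S, ∀ t ∈ S, s ≠ t → Disjoint s t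
  diag_union : ∀ s ∈ S, (s ∩ rdiag Ω).Nonempty → s ⊆ rdiag Ω
  conv_mem : ∀ s ∈ S, rconv s ∈ S
  inter_const : ∀ r ∈ S, ∀ s ∈ S, ∀ t ∈ S, ∀ p ∈ t, ∀ q ∈ t,
    ({γ : Ω | (p.1, γ) ∈ r ∧ (γ, p.2) ∈ s}).ncard
      = ({γ : Ω | (q.1, γ) ∈ r ∧ (γ, q.2) ∈ s}).ncard

/-- The valency of a basis relation (the common size of the rows over the left support). -/
noncomputable def valency {Ω : Type*} (s : Set (Ω × Ω)) : ℕ :=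
  sSup ((fun α => ({β | (α, β) ∈ s} : Set Ω).ncard) '' {α | ∃ β, (α, β) ∈ s})

def IsThick {Ω : Type*} (X : CohCfg Ω) : Prop :=
  ∀ s ∈ X.S, Disjoint s (rdiag Ω) → ¬(valency s = 1 ∧ valency (rconv s) = 1)

def IsParabolic {Ω : Type*} (X : CohCfg Ω) (e : Set (Ω × Ω)) : Prop :=
  IsEquivRel e ∧ ∀ s ∈ X.S, (s ∩ e).Nonempty → s ⊆ e

def Perp {Ω : Type*} (X : CohCfg Ω) (e f : Set (Ω × Ω)) : Prop :=
  ∀ x ∈ X.S, x ⊆ e → ∀ y ∈ X.S, y ⊆ f → (rcomp x y).Nonempty → rcomp x y ∈ X.S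

def Redundant {Ω : Type*} (X : CohCfg Ω) (s : Set (Ω × Ω)) : Prop :=
  ∃ x ∈ X.S, ∃ y ∈ X.S, Disjoint x (rdiag Ω) ∧ Disjoint y (rdiag Ω) ∧
    s = rcomp x y ∧ eqvClosure x ∩ eqvClosure y = rdiag Ω
section Stmt10Aux

variable {Ω : Type*}

lemma eqvClosure_isEquiv (r : Set (Ω × Ω)) : IsEquivRel (eqvClosure r) := by
  refine ⟨?_, ?_, ?_⟩
  · intro a
    intro e he
    exact he.1.refl a
  · intro a b hab e he
    exact he.1.symm (hab e he)
  · intro a b c hab hbc e he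
    exact he.1.trans (hab e he) (hbc e he)

lemma subset_eqvClosure (r : Set (Ω × Ω)) : r ⊆ eqvClosure r := by
  intro p hp e he
  have := he.2 hp
  cases p; exact this

lemma eqvClosure_min {r e : Set (Ω × Ω)} (he : IsEquivRel e) (h : r ⊆ e) :
    eqvClosure r ⊆ e := Set.sInter_subset_of_mem ⟨he, h⟩

lemma rdiag_subset_of_equiv {e : Set (Ω × Ω)} (he : IsEquivRel e) : rdiag Ω ⊆ e := by
  rintro ⟨a, b⟩ hab
  have : a = b := hab
  subst this
  exact he.refl a

lemma joinAll_isEquiv (B : Set (Set (Ω × Ω))) : IsEquivRel (joinAll B) :=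
  eqvClosure_isEquiv _

lemma subset_joinAll {B : Set (Set (Ω × Ω))} {s : Set (Ω × Ω)} (hs : s ∈ B) :
    s ⊆ joinAll B := fun p hp => subset_eqvClosure _ ⟨s, hs, hp⟩

lemma joinAll_subset {B : Set (Set (Ω × Ω))} {K : Set (Ω × Ω)} (hK : IsEquivRel K)
    (h : ∀ s ∈ B, s ⊆ K) : joinAll B ⊆ K := by
  apply eqvClosure_min hK
  rintro p ⟨s, hs, hp⟩
  exact h s hs hp

/-- the stepping relation of a set of relations -/
def rstep (S : Set (Set (Ω × Ω))) (a b : Ω) : Prop := ∃ s ∈ S, (a, b) ∈ s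

lemma joinAll_eq_rtg {S : Set (Set (Ω × Ω))} (hS : ∀ s ∈ S, IsEquivRel s) :
    joinAll S = {p : Ω × Ω | Relation.ReflTransGen (rstep S) p.1 p.2} := by
  apply subset_antisymm
  · apply eqvClosure_min
    · refine ⟨?_, ?_, ?_⟩
      · intro a; exact Relation.ReflTransGen.refl
      · intro a b hab
        refine (@Relation.ReflTransGen.symmetric _ (rstep S) ⟨?_⟩).symm _ _ hab
        rintro x y ⟨s, hs, hxy⟩
        exact ⟨s, hs, (hS s hs).symm hxy⟩
      · intro a b c hab hbc
        exact Relation.ReflTransGen.trans hab hbc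
    · rintro ⟨a, b⟩ ⟨s, hs, hab⟩
      exact Relation.ReflTransGen.single ⟨s, hs, hab⟩
  · rintro ⟨a, b⟩ h
    simp only [Set.mem_setOf_eq] at h
    induction h with
    | refl => exact (joinAll_isEquiv S).refl a
    | @tail b c _ hbc ih =>
      obtain ⟨s, hs, hbc⟩ := hbc
      exact (joinAll_isEquiv S).trans ih (subset_eqvClosure _ ⟨s, hs, hbc⟩)

lemma rcomp_joinAll_comm {e : Set (Ω × Ω)} (he : IsEquivRel e)
    {S : Set (Set (Ω × Ω))} (hS : ∀ s ∈ S, IsEquivRel s)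
    (hcomm : ∀ s ∈ S, rcomp e s = rcomp s e) :
    rcomp e (joinAll S) = rcomp (joinAll S) e := by
  rw [joinAll_eq_rtg hS]
  have key : ∀ γ b : Ω, Relation.ReflTransGen (rstep S) γ b → ∀ a : Ω, (a, γ) ∈ e →
      ∃ δ, Relation.ReflTransGen (rstep S) a δ ∧ (δ, b) ∈ e := by
    intro γ b h
    induction h with
    | refl => exact fun a ha => ⟨a, Relation.ReflTransGen.refl, ha⟩
    | @tail c d _ hcd ih =>
      intro a ha
      obtain ⟨δ, h1, h2⟩ := ih a ha
      obtain ⟨s, hs, hcd⟩ := hcd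
      have : ((δ, d) : Ω × Ω) ∈ rcomp e s := ⟨c, h2, hcd⟩
      rw [hcomm s hs] at this
      obtain ⟨δ', h3, h4⟩ := this
      exact ⟨δ', h1.tail ⟨s, hs, h3⟩, h4⟩
  have hsymm : Symmetric (Relation.ReflTransGen (rstep S)) := by
    refine fun x' y' hxy' => (@Relation.ReflTransGen.symmetric _ (rstep S) ⟨?_⟩).symm x' y' hxy'
    rintro x y ⟨s, hs, hxy⟩
    exact ⟨s, hs, (hS s hs).symm hxy⟩
  ext ⟨a, b⟩
  constructor
  · rintro ⟨γ, h1, h2⟩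
    have h2' : Relation.ReflTransGen (rstep S) γ b := h2
    obtain ⟨δ, h3, h4⟩ := key γ b h2' a h1
    exact ⟨δ, h3, h4⟩
  · rintro ⟨γ, h1, h2⟩
    have h1' : Relation.ReflTransGen (rstep S) a γ := h1
    have h2' : (γ, b) ∈ e := h2
    obtain ⟨δ, h3, h4⟩ := key γ a (hsymm h1') b (he.symm h2')
    exact ⟨δ, he.symm h4, hsymm h3⟩

lemma rjoin_eq_rcomp {g h : Set (Ω × Ω)} (hg : IsEquivRel g) (hh : IsEquivRel h)
    (hc : rcomp g h = rcomp h g) : rjoin g h = rcomp g h := by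
  apply subset_antisymm
  · apply eqvClosure_min
    · refine ⟨?_, ?_, ?_⟩
      · intro a; exact ⟨a, hg.refl a, hh.refl a⟩
      · rintro a b ⟨γ, h1, h2⟩
        have : ((b, a) : Ω × Ω) ∈ rcomp h g := ⟨γ, hh.symm h2, hg.symm h1⟩
        rw [← hc] at this; exact this
      · rintro a b c ⟨γ, h1, h2⟩ ⟨δ, h3, h4⟩
        have : ((γ, δ) : Ω × Ω) ∈ rcomp h g := ⟨b, h2, h3⟩
        rw [← hc] at this
        obtain ⟨ε, h5, h6⟩ := this
        exact ⟨ε, hg.trans h1 h5, hh.trans h6 h4⟩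
    · rintro ⟨a, b⟩ hab
      cases hab with
      | inl hg' => exact ⟨b, hg', hh.refl b⟩
      | inr hh' => exact ⟨a, hg.refl a, hh'⟩
  · rintro ⟨a, b⟩ ⟨γ, h1, h2⟩
    have hj := eqvClosure_isEquiv (g ∪ h)
    exact hj.trans (subset_eqvClosure _ (Or.inl h1)) (subset_eqvClosure _ (Or.inr h2))

end Stmt10Aux

/-- if `R ⪯ P` are atomic Cartesian decompositions, then `R`
consists of the joins of the blocks of a partition of `P`. -/
theorem stmt10 {Ω : Type*} [Fintype Ω] (P R : Set (Set (Ω × Ω)))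
    (hP : IsACD P) (hR : IsACD R)
    (hle : ∀ e ∈ P, ∃ f ∈ R, e ⊆ f) :
    ∃ C : Set (Set (Set (Ω × Ω))),
      IsPartitionOf P C ∧ R = {g | ∃ B ∈ C, g = joinAll B} := by
  obtain ⟨hPne, hPeq, hPcomm, hPcd⟩ := hP
  obtain ⟨hRne, hReq, hRcomm, hRcd⟩ := hR
  -- the blocks
  set Bl : Set (Ω × Ω) → Set (Set (Ω × Ω)) := fun f => {e ∈ P | e ⊆ f} with hBl
  -- uniqueness of the containing element of R
  have huniq : ∀ e ∈ P, ∀ f ∈ R, ∀ f' ∈ R, e ⊆ f → e ⊆ f' → f = f' := by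
    intro e he f hf f' hf' hef hef'
    by_contra hne
    have hfc : f' ⊆ pcompl R f := by
      apply subset_joinAll
      exact ⟨hf', fun h => hne (h.symm)⟩
    have hed : e ⊆ rdiag Ω := by
      rw [← (hRcd f hf).1]
      exact fun p hp => ⟨hef hp, hfc (hef' hp)⟩
    have : e = rdiag Ω :=
      subset_antisymm hed (rdiag_subset_of_equiv (hPeq e he).1)
    exact (hPeq e he).2 this
  -- joinAll P = univ
  have hPuniv : joinAll P = Set.univ := by
    obtain ⟨e, he⟩ := hPne
    have h1 : rjoin e (pcompl P e) = Set.univ := (hPcd e he).2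
    apply subset_antisymm (Set.subset_univ _)
    rw [← h1]
    apply eqvClosure_min (joinAll_isEquiv P)
    rintro p hp
    cases hp with
    | inl h => exact subset_joinAll he h
    | inr h =>
      exact joinAll_subset (joinAll_isEquiv P)
        (fun s hs => subset_joinAll hs.1) h
  -- key: for f ∈ R, joinAll (Bl f) = f
  have hkey : ∀ f ∈ R, joinAll (Bl f) = f ∧ (Bl f).Nonempty := by
    intro f hf
    set g := joinAll (Bl f) with hg
    set h := joinAll (P \ Bl f) with hh
    have hgE := joinAll_isEquiv (Bl f)
    have hhE := joinAll_isEquiv (P \ Bl f)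
    have hgf : g ⊆ f := joinAll_subset (hReq f hf).1 (fun s hs => hs.2)
    have hhc : h ⊆ pcompl R f := by
      apply joinAll_subset (joinAll_isEquiv _)
      rintro s ⟨hsP, hsB⟩
      obtain ⟨f', hf', hsf'⟩ := hle s hsP
      have hne : f' ≠ f := by
        rintro rfl
        exact hsB ⟨hsP, hsf'⟩
      refine hsf'.trans (subset_joinAll ?_)
      exact ⟨hf', fun hx => hne hx⟩
    have hfh : f ∩ h = rdiag Ω := by
      apply subset_antisymm
      · rw [← (hRcd f hf).1]
        exact fun p hp => ⟨hp.1, hhc hp.2⟩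
      · intro p hp
        exact ⟨rdiag_subset_of_equiv (hReq f hf).1 hp, rdiag_subset_of_equiv hhE hp⟩
    -- g and h commute
    have hcgh : rcomp g h = rcomp h g := by
      have step1 : ∀ s ∈ P \ Bl f, rcomp s g = rcomp g s := by
        intro s hs
        exact rcomp_joinAll_comm (hPeq s hs.1).1 (fun t ht => (hPeq t ht.1).1)
          (fun t ht => hPcomm s hs.1 t ht.1)
      exact rcomp_joinAll_comm hgE (fun t ht => (hPeq t ht.1).1)
        (fun t ht => (step1 t ht).symm)
    -- rjoin g h = univ
    have hghuniv : rjoin g h = Set.univ := by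
      apply subset_antisymm (Set.subset_univ _)
      rw [← hPuniv]
      apply eqvClosure_min (eqvClosure_isEquiv (g ∪ h))
      rintro p ⟨s, hs, hp⟩
      by_cases hsB : s ∈ Bl f
      · exact subset_eqvClosure _ (Or.inl (subset_joinAll hsB hp))
      · exact subset_eqvClosure _ (Or.inr (subset_joinAll (Set.mem_diff_of_mem hs hsB) hp))
    have hcomprgh : rcomp g h = Set.univ := by
      rw [← rjoin_eq_rcomp hgE hhE hcgh]; exact hghuniv
    -- f ⊆ g
    have hfg : f ⊆ g := by
      rintro ⟨α, β⟩ hαβ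
      have : ((α, β) : Ω × Ω) ∈ rcomp g h := by rw [hcomprgh]; trivial
      obtain ⟨γ, h1, h2⟩ := this
      have hγβf : ((γ, β) : Ω × Ω) ∈ f :=
        (hReq f hf).1.trans ((hReq f hf).1.symm (hgf h1)) hαβ
      have hmem : ((γ, β) : Ω × Ω) ∈ f ∩ h := ⟨hγβf, h2⟩
      rw [hfh] at hmem
      have hγβ : γ = β := hmem
      subst hγβ
      exact h1
    refine ⟨subset_antisymm hgf hfg, ?_⟩
    -- nonemptiness: if Bl f empty, h = joinAll P = univ, then f = rdiag
    by_contra hemp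
    rw [Set.not_nonempty_iff_eq_empty] at hemp
    have hhuniv : h = Set.univ := by
      rw [hh, hemp, Set.diff_empty, hPuniv]
    have : f = rdiag Ω := by
      rw [← hfh, hhuniv, Set.inter_univ]
    exact (hReq f hf).2 this
  refine ⟨{B | ∃ f ∈ R, B = Bl f}, ⟨?_, ?_, ?_⟩, ?_⟩
  · rintro B ⟨f, hf, rfl⟩
    exact (hkey f hf).2
  · rintro B ⟨f, hf, rfl⟩ B' ⟨f', hf', rfl⟩ hne
    rw [Set.disjoint_left]
    rintro e ⟨heP, hef⟩ ⟨_, hef'⟩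
    exact hne (by rw [huniq e heP f hf f' hf' hef hef'])
  · apply subset_antisymm
    · rintro e ⟨B, ⟨f, hf, rfl⟩, heB⟩
      exact heB.1
    · intro e he
      obtain ⟨f, hf, hef⟩ := hle e he
      exact ⟨Bl f, ⟨f, hf, rfl⟩, he, hef⟩
  · ext f
    constructor
    · intro hf
      exact ⟨Bl f, ⟨f, hf, rfl⟩, ((hkey f hf).1).symm⟩
    · rintro ⟨B, ⟨f', hf', rfl⟩, rfl⟩
      rw [(hkey f' hf').1]
      exact hf'
end

section
/- Let 𝒳 = (Ω,S) be a thick coherent configuration and Q a set of pairwise commuting parabolics of 𝒳 such that e ⊥ f for all distinct e, f ∈ Q. Then for every e ∈ Q, e ∧ e' = 1_Ω, where e' is the join of all elements of Q other than e. -/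
open Set

section Auxiliary

variable {Ω : Type*}

lemma rcomp_assoc (r s t : Set (Ω × Ω)) :
    rcomp (rcomp r s) t = rcomp r (rcomp s t) := by
  ext ⟨a, b⟩
  constructor
  · rintro ⟨γ, ⟨δ, h1, h2⟩, h3⟩; exact ⟨δ, h1, γ, h2, h3⟩
  · rintro ⟨δ, h1, γ, h2, h3⟩; exact ⟨γ, ⟨δ, h1, h2⟩, h3⟩

lemma rcomp_mono {A A' B B' : Set (Ω × Ω)} (h1 : A ⊆ A') (h2 : B ⊆ B') :
    rcomp A B ⊆ rcomp A' B' := by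
  rintro ⟨a, b⟩ ⟨γ, hγ1, hγ2⟩; exact ⟨γ, h1 hγ1, h2 hγ2⟩

lemma rcomp_diag_left (r : Set (Ω × Ω)) : rcomp (rdiag Ω) r = r := by
  ext ⟨a, b⟩
  constructor
  · rintro ⟨γ, h1, h2⟩
    have : a = γ := h1
    rwa [this]
  · intro h; exact ⟨a, rfl, h⟩

lemma rcomp_diag_right (r : Set (Ω × Ω)) : rcomp r (rdiag Ω) = r := by
  ext ⟨a, b⟩
  constructor
  · rintro ⟨γ, h1, h2⟩
    have : γ = b := h2
    rwa [this] at h1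
  · intro h; exact ⟨b, h, rfl⟩

lemma mem_rconv {r : Set (Ω × Ω)} {a b : Ω} : (a, b) ∈ rconv r ↔ (b, a) ∈ r := Iff.rfl

/-- Product of a list of relations. -/
def listProd (l : List (Set (Ω × Ω))) : Set (Ω × Ω) := l.foldr rcomp (rdiag Ω)

lemma listProd_nil : listProd ([] : List (Set (Ω × Ω))) = rdiag Ω := rfl

lemma listProd_cons (f : Set (Ω × Ω)) (t : List (Set (Ω × Ω))) :
    listProd (f :: t) = rcomp f (listProd t) := rfl

lemma listProd_refl {l : List (Set (Ω × Ω))} (hEq : ∀ f ∈ l, IsEquivRel f) (ω : Ω) :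
    (ω, ω) ∈ listProd l := by
  induction l with
  | nil => exact rfl
  | cons g t ih =>
      exact ⟨ω, (hEq g (List.mem_cons_self (a := g) (l := t))).refl ω,
        ih (fun f hf => hEq f (List.mem_cons_of_mem g hf))⟩

lemma comm_listProd {f : Set (Ω × Ω)} {l : List (Set (Ω × Ω))}
    (hf : ∀ g ∈ l, rcomp f g = rcomp g f) :
    rcomp f (listProd l) = rcomp (listProd l) f := by
  induction l with
  | nil => rw [listProd_nil, rcomp_diag_left, rcomp_diag_right]
  | cons g t ih =>
      have hfg : rcomp f g = rcomp g f := hf g (List.mem_cons_self (a := g) (l := t))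
      have hft : rcomp f (listProd t) = rcomp (listProd t) f :=
        ih (fun g' hg' => hf g' (List.mem_cons_of_mem g hg'))
      rw [listProd_cons, ← rcomp_assoc, hfg, rcomp_assoc, hft, ← rcomp_assoc]

lemma rconv_rcomp (r s : Set (Ω × Ω)) : rconv (rcomp r s) = rcomp (rconv s) (rconv r) := by
  ext ⟨a, b⟩
  constructor
  · rintro ⟨γ, h1, h2⟩; exact ⟨γ, h2, h1⟩
  · rintro ⟨γ, h1, h2⟩; exact ⟨γ, h2, h1⟩

lemma rconv_of_equiv {e : Set (Ω × Ω)} (he : IsEquivRel e) : rconv e = e := by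
  ext ⟨a, b⟩
  exact ⟨fun h => he.symm h, fun h => he.symm h⟩

lemma rconv_listProd {l : List (Set (Ω × Ω))} (hEq : ∀ f ∈ l, IsEquivRel f)
    (hCm : ∀ f ∈ l, ∀ g ∈ l, rcomp f g = rcomp g f) :
    rconv (listProd l) = listProd l := by
  induction l with
  | nil =>
      rw [listProd_nil]
      ext ⟨a, b⟩
      exact ⟨fun h => (show b = a from h).symm, fun h => (show a = b from h).symm⟩
  | cons g t ih =>
      have hg : g ∈ g :: t := List.mem_cons_self (a := g) (l := t)
      have hEq' : ∀ f ∈ t, IsEquivRel f := fun f hf => hEq f (List.mem_cons_of_mem g hf)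
      have hCm' : ∀ f ∈ t, ∀ g' ∈ t, rcomp f g' = rcomp g' f :=
        fun f hf g' hg' => hCm f (List.mem_cons_of_mem g hf) g' (List.mem_cons_of_mem g hg')
      rw [listProd_cons, rconv_rcomp, ih hEq' hCm', rconv_of_equiv (hEq g hg),
        comm_listProd (fun g' hg' => hCm g hg g' (List.mem_cons_of_mem g hg'))]

lemma listProd_trans {l : List (Set (Ω × Ω))} (hEq : ∀ f ∈ l, IsEquivRel f)
    (hCm : ∀ f ∈ l, ∀ g ∈ l, rcomp f g = rcomp g f) :
    rcomp (listProd l) (listProd l) ⊆ listProd l := by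
  induction l with
  | nil => rw [listProd_nil, rcomp_diag_left]
  | cons g t ih =>
      have hg : g ∈ g :: t := List.mem_cons_self (a := g) (l := t)
      have hEq' : ∀ f ∈ t, IsEquivRel f := fun f hf => hEq f (List.mem_cons_of_mem g hf)
      have hCm' : ∀ f ∈ t, ∀ g' ∈ t, rcomp f g' = rcomp g' f :=
        fun f hf g' hg' => hCm f (List.mem_cons_of_mem g hf) g' (List.mem_cons_of_mem g hg')
      have hgg : rcomp g g ⊆ g := by
        rintro ⟨a, b⟩ ⟨γ, h1, h2⟩
        exact (hEq g hg).trans h1 h2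
      have hcomm : rcomp g (listProd t) = rcomp (listProd t) g :=
        comm_listProd (fun g' hg' => hCm g hg g' (List.mem_cons_of_mem g hg'))
      calc rcomp (listProd (g :: t)) (listProd (g :: t))
          = rcomp g (rcomp (rcomp (listProd t) g) (listProd t)) := by
            rw [listProd_cons, rcomp_assoc, ← rcomp_assoc (listProd t)]
        _ = rcomp g (rcomp (rcomp g (listProd t)) (listProd t)) := by rw [hcomm]
        _ = rcomp (rcomp g g) (rcomp (listProd t) (listProd t)) := by
            rw [rcomp_assoc g, ← rcomp_assoc]
        _ ⊆ rcomp g (listProd t) := rcomp_mono hgg (ih hEq' hCm')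

lemma mem_listProd_of_mem {l : List (Set (Ω × Ω))} (hEq : ∀ f ∈ l, IsEquivRel f)
    {f : Set (Ω × Ω)} (hf : f ∈ l) : f ⊆ listProd l := by
  induction l with
  | nil => cases hf
  | cons g t ih =>
      have hEq' : ∀ f' ∈ t, IsEquivRel f' := fun f' hf' => hEq f' (List.mem_cons_of_mem g hf')
      rcases List.mem_cons.mp hf with h | h
      · subst h
        rintro ⟨a, b⟩ hab
        exact ⟨b, hab, listProd_refl hEq' b⟩
      · rintro ⟨a, b⟩ hab
        exact ⟨a, (hEq g (List.mem_cons_self (a := g) (l := t))).refl a, ih hEq' h hab⟩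

lemma listProd_subset {l : List (Set (Ω × Ω))} {E : Set (Ω × Ω)} (hE : IsEquivRel E)
    (h : ∀ f ∈ l, f ⊆ E) : listProd l ⊆ E := by
  induction l with
  | nil =>
      rintro ⟨a, b⟩ hab
      have : a = b := hab
      rw [this]; exact hE.refl b
  | cons g t ih =>
      rintro ⟨a, b⟩ ⟨γ, h1, h2⟩
      exact hE.trans (h g (List.mem_cons_self (a := g) (l := t)) h1)
        (ih (fun f hf => h f (List.mem_cons_of_mem g hf)) h2)

end Auxiliary
section CCAux
set_option linter.unusedSectionVars false

variable {Ω : Type*} [Fintype Ω] (X : CohCfg Ω)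

/-- A product of two basis relations absorbs every basis relation meeting it. -/
lemma prod_absorb {r s t : Set (Ω × Ω)} (hr : r ∈ X.S) (hs : s ∈ X.S) (ht : t ∈ X.S)
    (h : (t ∩ rcomp r s).Nonempty) : t ⊆ rcomp r s := by
  obtain ⟨p, hpt, hpc⟩ := h
  rintro ⟨a, b⟩ hq
  have hcard := X.inter_const r hr s hs t ht p hpt (a, b) hq
  have hpos : 0 < ({γ : Ω | (p.1, γ) ∈ r ∧ (γ, p.2) ∈ s}).ncard := by
    rw [Set.ncard_pos (Set.toFinite _)]
    obtain ⟨γ, h1, h2⟩ := hpc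
    exact ⟨γ, h1, h2⟩
  rw [hcard] at hpos
  obtain ⟨γ, h1, h2⟩ := (Set.ncard_pos (Set.toFinite _)).mp hpos
  exact ⟨γ, h1, h2⟩

/-- Absorbing sets (unions of basis relations). -/
def Abs (B : Set (Ω × Ω)) : Prop := ∀ s ∈ X.S, (s ∩ B).Nonempty → s ⊆ B

lemma abs_diag : Abs X (rdiag Ω) := fun s hs h => X.diag_union s hs h

lemma abs_rcomp {A B : Set (Ω × Ω)} (hA : Abs X A) (hB : Abs X B) :
    Abs X (rcomp A B) := by
  intro s hs ⟨p, hps, γ, h1, h2⟩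
  obtain ⟨r, hr, hr1⟩ := X.cover (p.1, γ)
  obtain ⟨u, hu, hu1⟩ := X.cover (γ, p.2)
  have hrA : r ⊆ A := hA r hr ⟨(p.1, γ), hr1, h1⟩
  have huB : u ⊆ B := hB u hu ⟨(γ, p.2), hu1, h2⟩
  have hsub : s ⊆ rcomp r u := by
    apply prod_absorb X hr hu hs
    exact ⟨p, hps, γ, hr1, hu1⟩
  exact fun q hq => rcomp_mono hrA huB (hsub hq)

lemma abs_listProd {l : List (Set (Ω × Ω))} (h : ∀ f ∈ l, Abs X f) :
    Abs X (listProd l) := by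
  induction l with
  | nil => exact abs_diag X
  | cons g t ih =>
      exact abs_rcomp X (h g (List.mem_cons_self (a := g) (l := t)))
        (ih (fun f hf => h f (List.mem_cons_of_mem g hf)))

lemma valency_one {x : Set (Ω × Ω)} (hne : x.Nonempty)
    (h : ∀ {a b b' : Ω}, (a, b) ∈ x → (a, b') ∈ x → b = b') : valency x = 1 := by
  have himg : ((fun α => ({β | (α, β) ∈ x} : Set Ω).ncard) '' {α | ∃ β, (α, β) ∈ x}) = {1} := by
    apply Set.eq_singleton_iff_nonempty_unique_mem.mpr
    constructor
    · obtain ⟨⟨a, b⟩, hab⟩ := hne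
      refine ⟨_, ⟨a, ⟨b, hab⟩, rfl⟩⟩
    · rintro n ⟨α, ⟨β, hβ⟩, rfl⟩
      have : {β' | (α, β') ∈ x} = {β} := by
        ext β'
        constructor
        · intro hβ'; exact h hβ' hβ
        · rintro rfl; exact hβ
      exact (congrArg Set.ncard this).trans (Set.ncard_singleton β)
  rw [valency, himg, csSup_singleton]

end CCAux
section MainAux
set_option linter.unusedSectionVars false

variable {Ω : Type*} [Fintype Ω] (X : CohCfg Ω)

lemma rconv_rconv (r : Set (Ω × Ω)) : rconv (rconv r) = r := rfl

lemma key_lemma (Q : Set (Set (Ω × Ω)))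
    (hpar : ∀ e ∈ Q, IsParabolic X e)
    (hperp : ∀ e ∈ Q, ∀ f ∈ Q, e ≠ f → Perp X e f)
    (a c : Set (Ω × Ω)) (ha : a ∈ Q) (hc : c ∈ Q) (hca : c ≠ a)
    (B : Set (Ω × Ω)) (hBabs : Abs X B)
    (hBsym : ∀ {p q : Ω}, (p, q) ∈ B → (q, p) ∈ B)
    (hBtrans : ∀ {p q r : Ω}, (p, q) ∈ B → (q, r) ∈ B → (p, r) ∈ B)
    (hIB : ∀ p q : Ω, (p, q) ∈ a → (p, q) ∈ B → p = q)
    (x : Set (Ω × Ω)) (hxS : x ∈ X.S) (hxa : x ⊆ a)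
    (α β γ : Ω) (hαβx : (α, β) ∈ x) (hγB : (α, γ) ∈ B) (hγc : (γ, β) ∈ c) :
    rcomp x (rconv x) ⊆ rdiag Ω := by
  have haE := (hpar a ha).1
  have hxcS : rconv x ∈ X.S := X.conv_mem x hxS
  have hxca : rconv x ⊆ a := by
    rintro ⟨p, q⟩ hpq
    exact haE.symm (hxa hpq)
  obtain ⟨z, hzS, hzγβ⟩ := X.cover (γ, β)
  have hzc : z ⊆ c := (hpar c hc).2 z hzS ⟨(γ, β), hzγβ, hγc⟩
  have hvS : rcomp z (rconv x) ∈ X.S :=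
    hperp c hc a ha hca z hzS hzc (rconv x) hxcS hxca ⟨(γ, α), β, hzγβ, hαβx⟩
  have hvB : rcomp z (rconv x) ⊆ B :=
    hBabs _ hvS ⟨(γ, α), ⟨β, hzγβ, hαβx⟩, hBsym hγB⟩
  have hvcS : rconv (rcomp z (rconv x)) ∈ X.S := X.conv_mem _ hvS
  have hxsub : x ⊆ rcomp (rconv (rcomp z (rconv x))) z := by
    apply prod_absorb X hvcS hzS hxS
    exact ⟨(α, β), hαβx, γ, ⟨β, hzγβ, hαβx⟩, hzγβ⟩
  rintro ⟨p, q⟩ ⟨μ, h1, h2⟩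
  obtain ⟨ν, hν1, hν2⟩ := hxsub h1
  have hb1 : (p, ν) ∈ B := hBsym (hvB hν1)
  have hb2 : (ν, q) ∈ B := hvB ⟨μ, hν2, h2⟩
  have ha' : (p, q) ∈ a := haE.trans (hxa h1) (hxca h2)
  exact hIB p q ha' (hBtrans hb1 hb2)

lemma main_lemma (hX : IsThick X) (Q : Set (Set (Ω × Ω)))
    (hpar : ∀ e ∈ Q, IsParabolic X e)
    (hcomm : ∀ e ∈ Q, ∀ f ∈ Q, rcomp e f = rcomp f e)
    (hperp : ∀ e ∈ Q, ∀ f ∈ Q, e ≠ f → Perp X e f)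
    (a : Set (Ω × Ω)) (ha : a ∈ Q) :
    ∀ n (l : List (Set (Ω × Ω))), l.length ≤ n → (∀ f ∈ l, f ∈ Q ∧ f ≠ a) →
      ∀ α β : Ω, (α, β) ∈ a → (α, β) ∈ listProd l → α = β := by
  intro n
  induction n with
  | zero =>
      intro l hlen hl α β h1 h2
      have hnil : l = [] := List.length_eq_zero_iff.mp (Nat.le_zero.mp hlen)
      subst hnil
      exact h2
  | succ n ih =>
      intro l hlen hl α β hab hpl
      cases l with
      | nil => exact hpl
      | cons c t =>
          have hcQ : c ∈ Q := (hl c (List.mem_cons_self (a := c) (l := t))).1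
          have hca : c ≠ a := (hl c (List.mem_cons_self (a := c) (l := t))).2
          have htQ : ∀ f ∈ t, f ∈ Q ∧ f ≠ a := fun f hf => hl f (List.mem_cons_of_mem c hf)
          have htEq : ∀ f ∈ t, IsEquivRel f := fun f hf => (hpar f (htQ f hf).1).1
          have htCm : ∀ f ∈ t, ∀ g ∈ t, rcomp f g = rcomp g f :=
            fun f hf g hg => hcomm f (htQ f hf).1 g (htQ g hg).1
          have hBabs : Abs X (listProd t) :=
            abs_listProd X (fun f hf => (hpar f (htQ f hf).1).2)
          have hBconv : rconv (listProd t) = listProd t := rconv_listProd htEq htCm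
          have hBsym : ∀ {p q : Ω}, (p, q) ∈ listProd t → (q, p) ∈ listProd t := by
            intro p q h
            rw [← hBconv]
            exact h
          have hBtrans : ∀ {p q r : Ω}, (p, q) ∈ listProd t → (q, r) ∈ listProd t →
              (p, r) ∈ listProd t :=
            fun h1 h2 => listProd_trans htEq htCm ⟨_, h1, h2⟩
          have hIB : ∀ p q : Ω, (p, q) ∈ a → (p, q) ∈ listProd t → p = q :=
            fun p q h1 h2 =>
              ih t (Nat.le_of_succ_le_succ ((List.length_cons (a := c) (as := t) ▸ hlen : t.length + 1 ≤ n + 1)))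
                htQ p q h1 h2
          by_contra hne
          obtain ⟨x, hxS, hxab⟩ := X.cover (α, β)
          have hxa : x ⊆ a := (hpar a ha).2 x hxS ⟨(α, β), hxab, hab⟩
          have hcm : rcomp c (listProd t) = rcomp (listProd t) c :=
            comm_listProd (fun g hg => hcomm c hcQ g (htQ g hg).1)
          have hpl' : (α, β) ∈ rcomp (listProd t) c := by
            rw [← hcm]
            exact hpl
          obtain ⟨γ, hγB, hγc⟩ := hpl'
          have k1 : rcomp x (rconv x) ⊆ rdiag Ω :=
            key_lemma X Q hpar hperp a c ha hcQ hca (listProd t) hBabs hBsym hBtrans hIB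
              x hxS hxa α β γ hxab hγB hγc
          have haE := (hpar a ha).1
          have hβα_a : (β, α) ∈ a := haE.symm hab
          have hxcS : rconv x ∈ X.S := X.conv_mem x hxS
          have hxc_a : rconv x ⊆ a := by
            rintro ⟨p, q⟩ hpq
            exact haE.symm (hxa hpq)
          have hβαx : (β, α) ∈ rconv x := hxab
          have hlEq : ∀ f ∈ c :: t, IsEquivRel f :=
            fun f hf => (hpar f (hl f hf).1).1
          have hlCm : ∀ f ∈ c :: t, ∀ g ∈ c :: t, rcomp f g = rcomp g f :=
            fun f hf g hg => hcomm f (hl f hf).1 g (hl g hg).1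
          have hpl2 : (β, α) ∈ rcomp (listProd t) c := by
            rw [← hcm]
            rw [← listProd_cons, ← rconv_listProd hlEq hlCm]
            exact hpl
          obtain ⟨δ, hδB, hδc⟩ := hpl2
          have k2 : rcomp (rconv x) (rconv (rconv x)) ⊆ rdiag Ω :=
            key_lemma X Q hpar hperp a c ha hcQ hca (listProd t) hBabs hBsym hBtrans hIB
              (rconv x) hxcS hxc_a β α δ hβαx hδB hδc
          rw [rconv_rconv] at k2
          have hdisj : Disjoint x (rdiag Ω) := by
            rw [Set.disjoint_iff_inter_eq_empty]
            by_contra hni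
            have hsub := X.diag_union x hxS (Set.nonempty_iff_ne_empty.mpr hni)
            exact hne (hsub hxab)
          apply hX x hxS hdisj
          constructor
          · apply valency_one ⟨(α, β), hxab⟩
            intro a' b b' h1 h2
            exact k2 (show (b, b') ∈ rcomp (rconv x) x from ⟨a', h1, h2⟩)
          · apply valency_one ⟨(β, α), hβαx⟩
            intro a' b b' h1 h2
            exact k1 (show (b, b') ∈ rcomp x (rconv x) from ⟨a', h1, h2⟩)

end MainAux
/-- pairwise commuting, pairwise perpendicular parabolics of a thick
coherent configuration satisfy `e ∧ e' = 1_Ω`. -/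
theorem stmt17 {Ω : Type*} [Fintype Ω] (X : CohCfg Ω) (hX : IsThick X)
    (Q : Set (Set (Ω × Ω)))
    (hpar : ∀ e ∈ Q, IsParabolic X e)
    (hcomm : ∀ e ∈ Q, ∀ f ∈ Q, rcomp e f = rcomp f e)
    (hperp : ∀ e ∈ Q, ∀ f ∈ Q, e ≠ f → Perp X e f) :
    ∀ e ∈ Q, e ∩ joinAll (Q \ {e}) = rdiag Ω := by
  intro e he
  classical
  have hfin : (Q \ {e}).Finite := Set.toFinite _
  set l := hfin.toFinset.toList with hldef
  have hmem : ∀ f : Set (Ω × Ω), f ∈ l ↔ f ∈ Q \ {e} := by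
    intro f
    rw [hldef, Finset.mem_toList, Set.Finite.mem_toFinset]
  have hlQ : ∀ f ∈ l, f ∈ Q ∧ f ≠ e := by
    intro f hf
    have h := (hmem f).mp hf
    exact ⟨h.1, h.2⟩
  have hlEq : ∀ f ∈ l, IsEquivRel f := fun f hf => (hpar f (hlQ f hf).1).1
  have hlCm : ∀ f ∈ l, ∀ g ∈ l, rcomp f g = rcomp g f :=
    fun f hf g hg => hcomm f (hlQ f hf).1 g (hlQ g hg).1
  have hPlE : IsEquivRel (listProd l) := by
    refine ⟨fun ω => listProd_refl hlEq ω, ?_, ?_⟩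
    · intro p q h
      rw [← rconv_listProd hlEq hlCm]
      exact h
    · intro p q r h1 h2
      exact listProd_trans hlEq hlCm ⟨_, h1, h2⟩
  have hjoin : joinAll (Q \ {e}) = listProd l := by
    apply subset_antisymm
    · apply Set.sInter_subset_of_mem
      refine ⟨hPlE, ?_⟩
      rintro p ⟨f, hf, hpf⟩
      exact mem_listProd_of_mem hlEq ((hmem f).mpr hf) hpf
    · apply Set.subset_sInter
      rintro E ⟨hEe, hEsub⟩
      exact listProd_subset hEe
        (fun f hf => (Set.subset_sUnion_of_mem ((hmem f).mp hf)).trans hEsub)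
  rw [hjoin]
  apply subset_antisymm
  · rintro ⟨p, q⟩ ⟨h1, h2⟩
    exact main_lemma X hX Q hpar hcomm hperp e he l.length l le_rfl hlQ p q h1 h2
  · rintro ⟨p, q⟩ hpq
    have hpq' : p = q := hpq
    subst hpq'
    exact ⟨(hpar e he).1.refl p, listProd_refl hlEq p⟩
end
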